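/- arXiv:1301.4025 — 2 statements merged into one kernel-verified Lean document; each statement's English description precedes it below -/
import Mathlib

section
/- Let G be a free group of finite rank r, let φ: ℤ → Aut(G) be a homomorphism, and let Γ = ℤ ⋉_φ G be the corresponding semidirect product. Let f: ℕ → ℝ_{≥0} be a function with lim_{n→∞} f(n) = ∞. Then there exists a normal cofinal filtration {Γ_i}_{i∈ℕ} of Γ such that d(Γ_i) ≤ f([Γ:Γ_i]) for every i ∈ ℕ. -/
open scoped NNReal

namespace SRG

variable {r : ℕ}

def cp (ℓ : List (Fin r × Bool)) (a : Fin r) (u : ℕ) : Prop :=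
  u < ℓ.length ∧ ℓ[ℓ.length - 1 - u]? = some (a, true)

def cm (ℓ : List (Fin r × Bool)) (a : Fin r) (u : ℕ) : Prop :=
  0 < u ∧ ℓ[ℓ.length - u]? = some (a, false)

def cp' (ℓ : List (Fin r × Bool)) (a : Fin r) (v : ℕ) : Prop :=
  0 < v ∧ ℓ[ℓ.length - v]? = some (a, true)

def cm' (ℓ : List (Fin r × Bool)) (a : Fin r) (v : ℕ) : Prop :=
  v < ℓ.length ∧ ℓ[ℓ.length - 1 - v]? = some (a, false)

instance (ℓ : List (Fin r × Bool)) (a : Fin r) : DecidablePred (cp ℓ a) := fun u => by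
  unfold cp; infer_instance
instance (ℓ : List (Fin r × Bool)) (a : Fin r) : DecidablePred (cm ℓ a) := fun u => by
  unfold cm; infer_instance
instance (ℓ : List (Fin r × Bool)) (a : Fin r) : DecidablePred (cp' ℓ a) := fun u => by
  unfold cp'; infer_instance
instance (ℓ : List (Fin r × Bool)) (a : Fin r) : DecidablePred (cm' ℓ a) := fun u => by
  unfold cm'; infer_instance

def fwd (ℓ : List (Fin r × Bool)) (a : Fin r)
    (x : {u : Fin (ℓ.length + 1) // cp ℓ a u.val ∨ cm ℓ a u.val}) :
    {v : Fin (ℓ.length + 1) // cp' ℓ a v.val ∨ cm' ℓ a v.val} :=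
  if h : cp ℓ a x.1.val then
    ⟨⟨x.1.val + 1, by have := h.1; omega⟩, Or.inl (by
      refine ⟨Nat.succ_pos _, ?_⟩
      show ℓ[ℓ.length - (x.1.val + 1)]? = some (a, true)
      have e : ℓ.length - (x.1.val + 1) = ℓ.length - 1 - x.1.val := by omega
      rw [e]; exact h.2)⟩
  else
    have hm : cm ℓ a x.1.val := x.2.resolve_left h
    ⟨⟨x.1.val - 1, by have := x.1.isLt; omega⟩, Or.inr (by
      refine ⟨?_, ?_⟩
      · show x.1.val - 1 < ℓ.length
        have := x.1.isLt; have := hm.1; omega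
      · show ℓ[ℓ.length - 1 - (x.1.val - 1)]? = some (a, false)
        have h1 := hm.1
        have e : ℓ.length - 1 - (x.1.val - 1) = ℓ.length - x.1.val := by
          have := x.1.isLt; omega
        rw [e]; exact hm.2)⟩

def bwd (ℓ : List (Fin r × Bool)) (a : Fin r)
    (y : {v : Fin (ℓ.length + 1) // cp' ℓ a v.val ∨ cm' ℓ a v.val}) :
    {u : Fin (ℓ.length + 1) // cp ℓ a u.val ∨ cm ℓ a u.val} :=
  if h : cp' ℓ a y.1.val then
    ⟨⟨y.1.val - 1, by have := y.1.isLt; omega⟩, Or.inl (by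
      refine ⟨?_, ?_⟩
      · show y.1.val - 1 < ℓ.length
        have := h.1; have := y.1.isLt; omega
      · show ℓ[ℓ.length - 1 - (y.1.val - 1)]? = some (a, true)
        have h1 := h.1
        have e : ℓ.length - 1 - (y.1.val - 1) = ℓ.length - y.1.val := by
          have := y.1.isLt; have := h.1; omega
        rw [e]; exact h.2)⟩
  else
    have hm : cm' ℓ a y.1.val := y.2.resolve_left h
    ⟨⟨y.1.val + 1, by have := hm.1; omega⟩, Or.inr (by
      refine ⟨Nat.succ_pos _, ?_⟩
      show ℓ[ℓ.length - (y.1.val + 1)]? = some (a, false)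
      have e : ℓ.length - (y.1.val + 1) = ℓ.length - 1 - y.1.val := by omega
      rw [e]; exact hm.2)⟩

def Red (ℓ : List (Fin r × Bool)) : Prop :=
  ∀ (i : ℕ) (x : Fin r) (b : Bool),
    ℓ[i]? = some (x, b) → ℓ[i + 1]? = some (x, !b) → False

theorem not_cp_cm {ℓ : List (Fin r × Bool)} (hred : Red ℓ) (a : Fin r) (u : ℕ)
    (h1 : cp ℓ a u) (h2 : cm ℓ a u) : False := by
  have h11 := h1.1; have h21 := h2.1
  refine hred (ℓ.length - 1 - u) a true h1.2 ?_
  have e : ℓ.length - 1 - u + 1 = ℓ.length - u := by omega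
  rw [e, Bool.not_true]; exact h2.2

theorem not_cp'_cm' {ℓ : List (Fin r × Bool)} (hred : Red ℓ) (a : Fin r) (v : ℕ)
    (h1 : cp' ℓ a v) (h2 : cm' ℓ a v) : False := by
  have h11 := h1.1; have h21 := h2.1
  refine hred (ℓ.length - 1 - v) a false h2.2 ?_
  have e : ℓ.length - 1 - v + 1 = ℓ.length - v := by omega
  rw [e, Bool.not_false]; exact h1.2

theorem fwd_val_pos (ℓ : List (Fin r × Bool)) (a : Fin r)
    (x : {u : Fin (ℓ.length + 1) // cp ℓ a u.val ∨ cm ℓ a u.val})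
    (h : cp ℓ a x.1.val) : (fwd ℓ a x).1.val = x.1.val + 1 := by
  unfold fwd; rw [dif_pos h]

theorem fwd_val_neg (ℓ : List (Fin r × Bool)) (a : Fin r)
    (x : {u : Fin (ℓ.length + 1) // cp ℓ a u.val ∨ cm ℓ a u.val})
    (h : ¬ cp ℓ a x.1.val) : (fwd ℓ a x).1.val = x.1.val - 1 := by
  unfold fwd; rw [dif_neg h]

theorem bwd_val_pos (ℓ : List (Fin r × Bool)) (a : Fin r)
    (y : {v : Fin (ℓ.length + 1) // cp' ℓ a v.val ∨ cm' ℓ a v.val})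
    (h : cp' ℓ a y.1.val) : (bwd ℓ a y).1.val = y.1.val - 1 := by
  unfold bwd; rw [dif_pos h]

theorem bwd_val_neg (ℓ : List (Fin r × Bool)) (a : Fin r)
    (y : {v : Fin (ℓ.length + 1) // cp' ℓ a v.val ∨ cm' ℓ a v.val})
    (h : ¬ cp' ℓ a y.1.val) : (bwd ℓ a y).1.val = y.1.val + 1 := by
  unfold bwd; rw [dif_neg h]

def eqv (ℓ : List (Fin r × Bool)) (hred : Red ℓ) (a : Fin r) :
    {u : Fin (ℓ.length + 1) // cp ℓ a u.val ∨ cm ℓ a u.val} ≃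
      {v : Fin (ℓ.length + 1) // cp' ℓ a v.val ∨ cm' ℓ a v.val} where
  toFun := fwd ℓ a
  invFun := bwd ℓ a
  left_inv := by
    intro x
    apply Subtype.ext; apply Fin.ext
    by_cases h : cp ℓ a x.1.val
    · have hv := fwd_val_pos ℓ a x h
      have h' : cp' ℓ a ((fwd ℓ a x).1.val) := by
        rw [hv]
        refine ⟨Nat.succ_pos _, ?_⟩
        have e : ℓ.length - (x.1.val + 1) = ℓ.length - 1 - x.1.val := by omega
        rw [e]; exact h.2
      rw [bwd_val_pos ℓ a _ h', hv]
      omega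
    · have hm : cm ℓ a x.1.val := x.2.resolve_left h
      have hv := fwd_val_neg ℓ a x h
      have h' : ¬ cp' ℓ a ((fwd ℓ a x).1.val) := by
        rw [hv]
        intro hc
        refine not_cp'_cm' hred a (x.1.val - 1) hc ⟨?_, ?_⟩
        · have := x.1.isLt; have := hm.1; omega
        · have h1 := hm.1
          have e : ℓ.length - 1 - (x.1.val - 1) = ℓ.length - x.1.val := by
            have := x.1.isLt; omega
          rw [e]; exact hm.2
      rw [bwd_val_neg ℓ a _ h', hv]
      have := hm.1; omega
  right_inv := by
    intro y
    apply Subtype.ext; apply Fin.ext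
    by_cases h : cp' ℓ a y.1.val
    · have hv := bwd_val_pos ℓ a y h
      have h' : cp ℓ a ((bwd ℓ a y).1.val) := by
        rw [hv]
        refine ⟨by have := h.1; have := y.1.isLt; omega, ?_⟩
        have e : ℓ.length - 1 - (y.1.val - 1) = ℓ.length - y.1.val := by
          have := y.1.isLt; have := h.1; omega
        rw [e]; exact h.2
      rw [fwd_val_pos ℓ a _ h', hv]
      have := h.1; omega
    · have hm : cm' ℓ a y.1.val := y.2.resolve_left h
      have hv := bwd_val_neg ℓ a y h
      have h' : ¬ cp ℓ a ((bwd ℓ a y).1.val) := by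
        rw [hv]
        intro hc
        refine not_cp_cm hred a (y.1.val + 1) hc ⟨Nat.succ_pos _, ?_⟩
        have e : ℓ.length - (y.1.val + 1) = ℓ.length - 1 - y.1.val := by omega
        rw [e]; exact hm.2
      rw [fwd_val_neg ℓ a _ h', hv]
      omega

noncomputable def sigma (ℓ : List (Fin r × Bool)) (hred : Red ℓ) (a : Fin r) :
    Equiv.Perm (Fin (ℓ.length + 1)) :=
  (eqv ℓ hred a).extendSubtype

theorem sigma_plus (ℓ : List (Fin r × Bool)) (hred : Red ℓ) (a : Fin r) (i : ℕ)
    (hi : i < ℓ.length) (h : ℓ[i]? = some (a, true)) :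
    sigma ℓ hred a ⟨ℓ.length - 1 - i, by omega⟩ = ⟨ℓ.length - i, by omega⟩ := by
  have hp : cp ℓ a (ℓ.length - 1 - i) := by
    refine ⟨by omega, ?_⟩
    have e : ℓ.length - 1 - (ℓ.length - 1 - i) = i := by omega
    rw [e]; exact h
  rw [sigma, Equiv.extendSubtype_apply_of_mem (eqv ℓ hred a) _ (Or.inl hp)]
  show ((fwd ℓ a ⟨⟨ℓ.length - 1 - i, by omega⟩, Or.inl hp⟩ : Subtype _) : Fin (ℓ.length + 1))
    = ⟨ℓ.length - i, by omega⟩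
  rw [fwd, dif_pos hp]
  apply Fin.ext
  show ℓ.length - 1 - i + 1 = ℓ.length - i
  omega

theorem sigma_minus (ℓ : List (Fin r × Bool)) (hred : Red ℓ) (a : Fin r) (i : ℕ)
    (hi : i < ℓ.length) (h : ℓ[i]? = some (a, false)) :
    sigma ℓ hred a ⟨ℓ.length - i, by omega⟩ = ⟨ℓ.length - 1 - i, by omega⟩ := by
  have hm : cm ℓ a (ℓ.length - i) := by
    refine ⟨by omega, ?_⟩
    have e : ℓ.length - (ℓ.length - i) = i := by omega
    rw [e]; exact h
  have hnp : ¬ cp ℓ a (ℓ.length - i) := fun hc => not_cp_cm hred a _ hc hm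
  rw [sigma, Equiv.extendSubtype_apply_of_mem (eqv ℓ hred a) _ (Or.inr hm)]
  show ((fwd ℓ a ⟨⟨ℓ.length - i, by omega⟩, Or.inr hm⟩ : Subtype _) : Fin (ℓ.length + 1))
    = ⟨ℓ.length - 1 - i, by omega⟩
  rw [fwd, dif_neg hnp]
  apply Fin.ext
  show ℓ.length - i - 1 = ℓ.length - 1 - i
  omega

theorem exists_perm_hom (w : FreeGroup (Fin r)) (hw : w ≠ 1) :
    ∃ (n : ℕ) (g : FreeGroup (Fin r) →* Equiv.Perm (Fin n)), g w ≠ 1 := by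
  classical
  set ℓ := w.toWord with hℓ
  have hred : Red ℓ := by
    intro i x b h1 h2
    have hi1 : i + 1 < ℓ.length := (List.getElem?_eq_some_iff.mp h2).1
    have hi : i < ℓ.length := by omega
    have e1 : ℓ.drop (i+1) = (x, !b) :: ℓ.drop (i+2) := by
      rw [List.drop_eq_getElem_cons hi1]
      rw [List.getElem?_eq_getElem hi1] at h2
      rw [Option.some_inj.mp h2]
    have e0 : ℓ.drop i = (x, b) :: (x, !b) :: ℓ.drop (i+2) := by
      rw [List.drop_eq_getElem_cons hi]
      rw [List.getElem?_eq_getElem hi] at h1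
      rw [Option.some_inj.mp h1, e1]
    have hh : FreeGroup.reduce ℓ = ℓ.take i ++ (x, b) :: (x, !b) :: ℓ.drop (i+2) := by
      rw [hℓ, FreeGroup.reduce_toWord, ← hℓ]
      conv_lhs => rw [← List.take_append_drop i ℓ]
      rw [e0]
    exact FreeGroup.reduce.not hh
  have hL0 : 0 < ℓ.length := by
    rcases Nat.eq_zero_or_pos ℓ.length with h | h
    · exact absurd (FreeGroup.toWord_eq_nil_iff.mp (List.length_eq_zero_iff.mp (hℓ ▸ h))) hw
    · exact h
  have key : ∀ k i (hik : i + k = ℓ.length),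
      (((ℓ.drop i).map (fun x => cond x.2 (sigma ℓ hred x.1) (sigma ℓ hred x.1)⁻¹)).prod)
          ⟨0, by omega⟩
        = ⟨k, by omega⟩ := by
    intro k
    induction k with
    | zero =>
      intro i hi
      have hd : ℓ.drop i = [] := by
        apply List.drop_eq_nil_of_le; omega
      simp [hd]
    | succ k ih =>
      intro i hi
      have hiL : i < ℓ.length := by omega
      rw [List.drop_eq_getElem_cons hiL, List.map_cons, List.prod_cons,
        Equiv.Perm.mul_apply, ih (i+1) (by omega)]
      have hget : ℓ[i]? = some ((ℓ[i]'hiL).1, (ℓ[i]'hiL).2) := by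
        rw [List.getElem?_eq_getElem hiL]
      cases hb : (ℓ[i]'hiL).2 with
      | true =>
        rw [hb] at hget
        simp only [hb, cond_true]
        have hs := sigma_plus ℓ hred (ℓ[i]'hiL).1 i hiL hget
        simpa [show ℓ.length - 1 - i = k by omega, show ℓ.length - i = k + 1 by omega]
          using hs
      | false =>
        rw [hb] at hget
        simp only [hb, cond_false]
        rw [Equiv.Perm.inv_def, Equiv.symm_apply_eq]
        have hs := sigma_minus ℓ hred (ℓ[i]'hiL).1 i hiL hget
        simpa [show ℓ.length - 1 - i = k by omega, show ℓ.length - i = k + 1 by omega]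
          using hs.symm
  refine ⟨ℓ.length + 1, FreeGroup.lift (fun a => sigma ℓ hred a), ?_⟩
  have hval : FreeGroup.lift (fun a => sigma ℓ hred a) w
      = (ℓ.map (fun x => cond x.2 (sigma ℓ hred x.1) (sigma ℓ hred x.1)⁻¹)).prod := by
    conv_lhs => rw [← FreeGroup.mk_toWord (x := w)]
    rw [FreeGroup.lift_mk]
  intro hone
  have h0 := key ℓ.length 0 (by omega)
  rw [List.drop_zero, ← hval, hone] at h0
  simp only [Equiv.Perm.coe_one, id_eq] at h0
  have : (0 : ℕ) = ℓ.length := congrArg Fin.val h0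
  omega


variable (r) in
noncomputable def KK (n : ℕ) : Subgroup (FreeGroup (Fin r)) :=
  ⨅ g : FreeGroup (Fin r) →* Equiv.Perm (Fin n), g.ker

instance (n : ℕ) : Finite (FreeGroup (Fin r) →* Equiv.Perm (Fin n)) :=
  Finite.of_equiv _ FreeGroup.lift

theorem mem_KK {n : ℕ} {x : FreeGroup (Fin r)} :
    x ∈ KK r n ↔ ∀ g : FreeGroup (Fin r) →* Equiv.Perm (Fin n), g x = 1 := by
  simp [KK, Subgroup.mem_iInf, MonoidHom.mem_ker]

theorem KK_finiteIndex (n : ℕ) : (KK r n).FiniteIndex :=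
  Subgroup.finiteIndex_iInf fun _ => inferInstance

theorem KK_normal (n : ℕ) : (KK r n).Normal := by
  constructor
  intro x hx g
  rw [mem_KK] at hx ⊢
  intro f
  simp [map_mul, hx f]

theorem KK_inv (n : ℕ) (e : MulAut (FreeGroup (Fin r))) {x : FreeGroup (Fin r)}
    (hx : x ∈ KK r n) : e x ∈ KK r n := by
  rw [mem_KK] at hx ⊢
  intro g
  exact hx (g.comp e.toMonoidHom)

theorem KK_mono {n m : ℕ} (h : n ≤ m) : KK r m ≤ KK r n := by
  intro x hx
  rw [mem_KK] at hx ⊢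
  intro g
  have h1 := hx ((Equiv.Perm.viaEmbeddingHom (Fin.castLEEmb h)).comp g)
  apply Equiv.Perm.viaEmbeddingHom_injective (Fin.castLEEmb h)
  rw [map_one]
  exact h1

theorem KK_bot : (⨅ n, KK r n) = ⊥ := by
  rw [Subgroup.eq_bot_iff_forall]
  intro x hx
  by_contra hne
  obtain ⟨n, g, hg⟩ := exists_perm_hom x hne
  exact hg (mem_KK.mp (Subgroup.mem_iInf.mp hx n) g)

variable (φ : Multiplicative ℤ →* MulAut (FreeGroup (Fin r)))

theorem phi_comp (a b : ℤ) (g : FreeGroup (Fin r)) :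
    φ (Multiplicative.ofAdd a) (φ (Multiplicative.ofAdd b) g)
      = φ (Multiplicative.ofAdd (a + b)) g := by
  rw [← MulAut.mul_apply, ← map_mul, ← ofAdd_add]

theorem exists_period (n : ℕ) :
    ∃ d : ℕ, 0 < d ∧ ∀ z : Multiplicative ℤ, (d : ℤ) ∣ z.toAdd →
      ∀ g : FreeGroup (Fin r), g⁻¹ * φ z g ∈ KK r n := by
  classical
  haveI hN : (KK r n).Normal := KK_normal n
  haveI hF : (KK r n).FiniteIndex := KK_finiteIndex n
  haveI : Finite (FreeGroup (Fin r) ⧸ KK r n) := Subgroup.finite_quotient_of_finiteIndex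
  set Q := FreeGroup (Fin r) ⧸ KK r n with hQ
  have hle : ∀ k : ℤ, KK r n ≤ (KK r n).comap (φ (Multiplicative.ofAdd k)).toMonoidHom := by
    intro k x hx
    exact KK_inv n _ hx
  let c : ℕ → (Q →* Q) := fun k =>
    QuotientGroup.map (KK r n) (KK r n) (φ (Multiplicative.ofAdd (k : ℤ))).toMonoidHom (hle k)
  have hc : ∀ (k : ℕ) (g : FreeGroup (Fin r)),
      c k (QuotientGroup.mk g) = QuotientGroup.mk (φ (Multiplicative.ofAdd (k : ℤ)) g) :=
    fun k g => QuotientGroup.map_mk _ _ _ _ g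
  obtain ⟨x, y, hxy, heq⟩ := Finite.exists_ne_map_eq_of_infinite (fun k : ℕ => ⇑(c k))
  -- helper
  have helper : ∀ x y : ℕ, x < y → (⇑(c x) = ⇑(c y)) →
      ∃ d : ℕ, 0 < d ∧ ∀ z : Multiplicative ℤ, (d : ℤ) ∣ z.toAdd →
        ∀ g : FreeGroup (Fin r), g⁻¹ * φ z g ∈ KK r n := by
    clear hxy heq x y
    intro x y hlt heq
    set e : ℤ := (y : ℤ) - (x : ℤ) with he
    have heq' : ∀ g : FreeGroup (Fin r),
        (QuotientGroup.mk (φ (Multiplicative.ofAdd (x : ℤ)) g) : Q)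
          = QuotientGroup.mk (φ (Multiplicative.ofAdd (y : ℤ)) g) := by
      intro g
      have := congrFun heq (QuotientGroup.mk g)
      rwa [hc, hc] at this
    have hP : ∀ g : FreeGroup (Fin r),
        (QuotientGroup.mk g : Q) = QuotientGroup.mk (φ (Multiplicative.ofAdd e) g) := by
      intro g
      have h1 := heq' (φ (Multiplicative.ofAdd (-(x : ℤ))) g)
      rw [phi_comp, phi_comp] at h1
      rw [show (x : ℤ) + -(x : ℤ) = 0 by ring] at h1
      rw [show (y : ℤ) + -(x : ℤ) = e by rw [he]; ring] at h1
      rwa [ofAdd_zero, map_one, MulAut.one_apply] at h1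
    have hPn : ∀ (m : ℕ) (g : FreeGroup (Fin r)),
        (QuotientGroup.mk g : Q) = QuotientGroup.mk (φ (Multiplicative.ofAdd (e * m)) g) := by
      intro m
      induction m with
      | zero => intro g; simp
      | succ m ih =>
        intro g
        have h1 := hP g
        have h2 := ih (φ (Multiplicative.ofAdd e) g)
        rw [phi_comp] at h2
        rw [h1, h2]
        congr 2
        push_cast
        ring_nf
    have hPneg : ∀ (m : ℕ) (g : FreeGroup (Fin r)),
        (QuotientGroup.mk g : Q) = QuotientGroup.mk (φ (Multiplicative.ofAdd (-(e * m))) g) := by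
      intro m g
      have h1 := hPn m (φ (Multiplicative.ofAdd (-(e * (m : ℤ)))) g)
      rw [phi_comp] at h1
      rw [show e * (m : ℤ) + -(e * (m : ℤ)) = 0 by ring] at h1
      rw [ofAdd_zero, map_one, MulAut.one_apply] at h1
      exact h1.symm
    refine ⟨y - x, by omega, ?_⟩
    intro z hz g
    have hdz : e ∣ z.toAdd := by
      have : ((y - x : ℕ) : ℤ) = e := by rw [he]; push_cast [Nat.cast_sub hlt.le]; ring_nf
      rwa [this] at hz
    obtain ⟨m, hm⟩ := hdz
    have hmk : (QuotientGroup.mk g : Q) = QuotientGroup.mk (φ z g) := by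
      obtain ⟨m', rfl | rfl⟩ := Int.eq_nat_or_neg m
      · have := hPn m' g
        rwa [show e * (m' : ℤ) = z.toAdd by rw [hm], ofAdd_toAdd] at this
      · have := hPneg m' g
        rwa [show -(e * (m' : ℤ)) = z.toAdd by rw [hm]; ring, ofAdd_toAdd] at this
    exact QuotientGroup.eq.mp hmk
  rcases hxy.lt_or_gt with h | h
  · exact helper x y h heq
  · exact helper y x h heq.symm


/-- The subgroup `K_n ⋊ Nℤ` of the semidirect product. -/
def PP (n N : ℕ) : Subgroup (FreeGroup (Fin r) ⋊[φ] Multiplicative ℤ) where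
  carrier := {x | x.left ∈ KK r n ∧ (N : ℤ) ∣ x.right.toAdd}
  one_mem' := ⟨by simp only [SemidirectProduct.one_left]; exact one_mem _, by
    simp only [SemidirectProduct.one_right, toAdd_one]; exact dvd_zero _⟩
  mul_mem' := by
    rintro a b ⟨ha1, ha2⟩ ⟨hb1, hb2⟩
    refine ⟨?_, ?_⟩
    · show a.left * φ a.right b.left ∈ KK r n
      exact mul_mem ha1 (KK_inv n (φ a.right) hb1)
    · show (N : ℤ) ∣ (a.right * b.right).toAdd
      rw [toAdd_mul]
      exact dvd_add ha2 hb2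
  inv_mem' := by
    rintro a ⟨ha1, ha2⟩
    refine ⟨?_, ?_⟩
    · show φ a.right⁻¹ a.left⁻¹ ∈ KK r n
      exact KK_inv n _ (inv_mem ha1)
    · show (N : ℤ) ∣ (a.right⁻¹).toAdd
      rw [toAdd_inv]
      exact Dvd.dvd.neg_right ha2

theorem mem_PP {n N : ℕ} {x : FreeGroup (Fin r) ⋊[φ] Multiplicative ℤ} :
    x ∈ PP φ n N ↔ x.left ∈ KK r n ∧ (N : ℤ) ∣ x.right.toAdd := Iff.rfl

theorem PP_normal (n N : ℕ)
    (hper : ∀ z : Multiplicative ℤ, (N : ℤ) ∣ z.toAdd →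
      ∀ g : FreeGroup (Fin r), g⁻¹ * φ z g ∈ KK r n) :
    (PP φ n N).Normal := by
  constructor
  intro x hx g
  rw [mem_PP] at hx ⊢
  constructor
  · show g.left * φ g.right x.left * φ ((g * x).right) (φ g.right⁻¹ g.left⁻¹) ∈ KK r n
    have e1 : φ ((g * x).right) (φ g.right⁻¹ g.left⁻¹) = φ x.right g.left⁻¹ := by
      rw [← MulAut.mul_apply, ← map_mul]
      congr 2
      show g.right * x.right * g.right⁻¹ = x.right
      rw [mul_comm g.right x.right, mul_inv_cancel_right]
    rw [e1]
    have h1 : φ g.right x.left ∈ KK r n := KK_inv n _ hx.1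
    have h2 : g.left * φ x.right g.left⁻¹ ∈ KK r n := by
      have := hper x.right hx.2 g.left⁻¹
      rwa [inv_inv] at this
    have e2 : g.left * φ g.right x.left * φ x.right g.left⁻¹
        = g.left * φ g.right x.left * g.left⁻¹ * (g.left * φ x.right g.left⁻¹) := by
      group
    rw [e2]
    exact mul_mem ((KK_normal n).conj_mem _ h1 g.left) h2
  · show (N : ℤ) ∣ ((g.right * x.right) * g.right⁻¹).toAdd
    have e : (g.right * x.right * g.right⁻¹) = x.right := by
      rw [mul_comm g.right x.right, mul_inv_cancel_right]
    rw [e]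
    exact hx.2

/-- the subgroup of elements whose `ℤ`-part is divisible by `N` -/
def AA (N : ℕ) : Subgroup (FreeGroup (Fin r) ⋊[φ] Multiplicative ℤ) :=
  Subgroup.comap SemidirectProduct.rightHom
    (AddSubgroup.toSubgroup (AddSubgroup.zmultiples (N : ℤ)))

theorem mem_AA {N : ℕ} {x : FreeGroup (Fin r) ⋊[φ] Multiplicative ℤ} :
    x ∈ AA φ N ↔ (N : ℤ) ∣ x.right.toAdd := by
  show x.right.toAdd ∈ AddSubgroup.zmultiples ((N : ℤ)) ↔ _
  exact Int.mem_zmultiples_iff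

theorem AA_index (N : ℕ) : (AA φ N).index = N := by
  rw [AA, Subgroup.index_comap_of_surjective _ SemidirectProduct.rightHom_surjective,
    AddSubgroup.index_toSubgroup, Int.index_zmultiples, Int.natAbs_natCast]

theorem PP_eq_inf (n N : ℕ) : PP φ n N = PP φ n 1 ⊓ AA φ N := by
  ext x
  simp only [mem_PP, mem_AA, Subgroup.mem_inf]
  constructor
  · rintro ⟨h1, h2⟩; exact ⟨⟨h1, one_dvd _⟩, h2⟩
  · rintro ⟨⟨h1, -⟩, h2⟩; exact ⟨h1, h2⟩

theorem PP_one_finiteIndex (n : ℕ) : (PP φ n 1).FiniteIndex := by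
  haveI := KK_finiteIndex (r := r) n
  haveI : Finite (FreeGroup (Fin r) ⧸ KK r n) :=
    Subgroup.finite_quotient_of_finiteIndex
  have cancel : ∀ (z : Multiplicative ℤ) (t : FreeGroup (Fin r)), φ z (φ z⁻¹ t) = t := by
    intro z t
    rw [← MulAut.mul_apply, ← map_mul, mul_inv_cancel, map_one, MulAut.one_apply]
  set J : (FreeGroup (Fin r) ⋊[φ] Multiplicative ℤ) ⧸ (PP φ n 1) →
      FreeGroup (Fin r) ⧸ KK r n :=
    fun q => QuotientGroup.mk (q.out.left) with hJ
  have hJinj : Function.Injective J := by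
    intro q1 q2 h
    rw [hJ] at h
    simp only at h
    have h1 : (q1.out.left)⁻¹ * q2.out.left ∈ KK r n := QuotientGroup.eq.mp h
    have h2 : q1.out⁻¹ * q2.out ∈ PP φ n 1 := by
      rw [mem_PP]
      constructor
      · show φ q1.out.right⁻¹ q1.out.left⁻¹ * φ q1.out.right⁻¹ q2.out.left ∈ KK r n
        rw [← map_mul]
        exact KK_inv n _ h1
      · exact one_dvd _
    calc q1 = QuotientGroup.mk q1.out := (QuotientGroup.out_eq' q1).symm
      _ = QuotientGroup.mk q2.out := QuotientGroup.eq.mpr h2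
      _ = q2 := QuotientGroup.out_eq' q2
  haveI : Finite ((FreeGroup (Fin r) ⋊[φ] Multiplicative ℤ) ⧸ (PP φ n 1)) :=
    Finite.of_injective J hJinj
  exact Subgroup.finiteIndex_of_finite_quotient

theorem PP_finiteIndex (n N : ℕ) (hN : 0 < N) : (PP φ n N).FiniteIndex := by
  haveI := PP_one_finiteIndex φ n
  haveI : (AA φ N).FiniteIndex := ⟨by rw [AA_index]; omega⟩
  rw [PP_eq_inf]
  infer_instance

theorem PP_index_ge (n N : ℕ) (hN : 0 < N) : N ≤ (PP φ n N).index := by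
  haveI := PP_finiteIndex φ n N hN
  have hle : PP φ n N ≤ AA φ N := by
    rw [PP_eq_inf]; exact inf_le_right
  have h1 : (AA φ N).index ∣ (PP φ n N).index := Subgroup.index_dvd_of_le hle
  rw [AA_index] at h1
  exact Nat.le_of_dvd (Nat.zero_lt_of_ne_zero (Subgroup.FiniteIndex.index_ne_zero)) h1

theorem PP_gens (n N : ℕ) (T : Finset ↥(KK r n))
    (hT : Subgroup.closure (T : Set ↥(KK r n)) = ⊤) :
    ∃ S : Finset ↥(PP φ n N),
      Subgroup.closure (S : Set ↥(PP φ n N)) = ⊤ ∧ S.card ≤ T.card + 1 := by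
  classical
  set S' : Finset (FreeGroup (Fin r) ⋊[φ] Multiplicative ℤ) :=
    T.image (fun t => SemidirectProduct.inl t.1) ∪ {SemidirectProduct.inr (Multiplicative.ofAdd (N : ℤ))} with hS'
  have hS'P : ∀ x ∈ S', x ∈ PP φ n N := by
    intro x hx
    rcases Finset.mem_union.mp hx with hx | hx
    · obtain ⟨t, ht, rfl⟩ := Finset.mem_image.mp hx
      rw [mem_PP]
      exact ⟨t.2, by simp only [SemidirectProduct.right_inl, toAdd_one]; exact dvd_zero _⟩
    · rw [Finset.mem_singleton.mp hx, mem_PP]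
      exact ⟨one_mem _, by rw [SemidirectProduct.right_inr, toAdd_ofAdd]⟩
  have hcl : Subgroup.closure (S' : Set (FreeGroup (Fin r) ⋊[φ] Multiplicative ℤ)) = PP φ n N := by
    apply le_antisymm
    · rw [Subgroup.closure_le]
      intro x hx
      exact hS'P x hx
    · intro x hx
      rw [← SemidirectProduct.inl_left_mul_inr_right x]
      apply mul_mem
      · have h1 : x.left ∈ Subgroup.map (KK r n).subtype ⊤ :=
          ⟨⟨x.left, hx.1⟩, Subgroup.mem_top _, rfl⟩
        rw [← hT, MonoidHom.map_closure] at h1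
        have h3 : SemidirectProduct.inl x.left ∈
            Subgroup.map (SemidirectProduct.inl (φ := φ))
              (Subgroup.closure ((KK r n).subtype '' T)) := ⟨x.left, h1, rfl⟩
        rw [MonoidHom.map_closure] at h3
        refine Subgroup.closure_mono ?_ h3
        rintro y ⟨z, ⟨t, ht, rfl⟩, rfl⟩
        apply Finset.mem_coe.mpr
        apply Finset.mem_union_left
        exact Finset.mem_image.mpr ⟨t, ht, rfl⟩
      · obtain ⟨m, hm⟩ := hx.2
        have e : x.right = (Multiplicative.ofAdd (N : ℤ)) ^ m := by
          apply Multiplicative.toAdd.injective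
          rw [hm]
          simp [toAdd_zpow, smul_eq_mul]
          ring
        rw [e, map_zpow]
        refine zpow_mem (Subgroup.subset_closure ?_) m
        exact Finset.mem_coe.mpr (Finset.mem_union_right _ (Finset.mem_singleton_self _))
  have hsub : ∀ x ∈ S', x ∈ PP φ n N := hS'P
  refine ⟨S'.attach.image (fun x => (⟨x.1, hsub x.1 x.2⟩ : ↥(PP φ n N))), ?_, ?_⟩
  · apply Subgroup.map_injective (PP φ n N).subtype_injective
    rw [MonoidHom.map_closure]
    have himg : (PP φ n N).subtype ''
        ((S'.attach.image (fun x => (⟨x.1, hsub x.1 x.2⟩ : ↥(PP φ n N)))) : Set ↥(PP φ n N))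
        = (S' : Set (FreeGroup (Fin r) ⋊[φ] Multiplicative ℤ)) := by
      apply Set.Subset.antisymm
      · rintro y ⟨z, hz, rfl⟩
        obtain ⟨x, -, rfl⟩ := Finset.mem_image.mp (Finset.mem_coe.mp hz)
        exact Finset.mem_coe.mpr x.2
      · intro y hy
        exact ⟨⟨y, hsub y hy⟩,
          Finset.mem_coe.mpr (Finset.mem_image.mpr ⟨⟨y, hy⟩, Finset.mem_attach _ _, rfl⟩), rfl⟩
    rw [himg, hcl]
    rw [← MonoidHom.range_eq_map, Subgroup.range_subtype]
  · calc (S'.attach.image (fun x => (⟨x.1, hsub x.1 x.2⟩ : ↥(PP φ n N)))).card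
        ≤ S'.attach.card := Finset.card_image_le
      _ = S'.card := Finset.card_attach
      _ ≤ (T.image (fun t => SemidirectProduct.inl t.1)).card + 1 := by
          rw [hS']
          exact (Finset.card_union_le _ _).trans_eq (by rw [Finset.card_singleton])
      _ ≤ T.card + 1 := by
          have := Finset.card_image_le (s := T) (f := fun t => (SemidirectProduct.inl t.1 :
            FreeGroup (Fin r) ⋊[φ] Multiplicative ℤ))
          omega


end SRG

/-- **Lemma 2.4 (free-fiber case).** Let `Γ = ℤ ⋉_φ G` be a semidirect product of `ℤ`
with a free group `G` of finite rank `r`, and let `f : ℕ → ℝ≥0` with `f n → ∞`.  Then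
there is a normal cofinal filtration `{Γᵢ}` of `Γ` with `d(Γᵢ) ≤ f([Γ:Γᵢ])` for every
`i`, where `d` denotes the minimal number of generators. -/
theorem slow_rank_growth_semidirect_free
    (r : ℕ) (φ : Multiplicative ℤ →* MulAut (FreeGroup (Fin r)))
    (f : ℕ → ℝ≥0) (hf : Filter.Tendsto f Filter.atTop Filter.atTop) :
    ∃ P : ℕ → Subgroup (FreeGroup (Fin r) ⋊[φ] Multiplicative ℤ),
      (∀ i, (P i).FiniteIndex) ∧
      (∀ i, P (i + 1) ≤ P i) ∧
      (⨅ i, P i) = ⊥ ∧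
      (∀ i, (P i).Normal) ∧
      (∀ i, ∃ S : Finset ↥(P i),
        Subgroup.closure (S : Set ↥(P i)) = ⊤ ∧ (S.card : ℝ≥0) ≤ f ((P i).index)) := by
  classical
  -- generating sets of the K_n via Schreier
  have hTex : ∀ i : ℕ, ∃ T : Finset ↥(SRG.KK r i),
      Subgroup.closure (T : Set ↥(SRG.KK r i)) = ⊤ := by
    intro i
    haveI := SRG.KK_finiteIndex (r := r) i
    have hS0 : Subgroup.closure
        ((Finset.univ.image (FreeGroup.of (α := Fin r)) : Finset (FreeGroup (Fin r))) :
          Set (FreeGroup (Fin r))) = ⊤ := by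
      rw [Finset.coe_image, Finset.coe_univ, Set.image_univ]
      exact FreeGroup.closure_range_of _
    obtain ⟨T, -, hT⟩ := Subgroup.exists_finset_card_le_mul (SRG.KK r i) hS0
    exact ⟨T, hT⟩
  choose T hT using hTex
  choose d hd hdper using fun i => SRG.exists_period (r := r) φ i
  have hMex : ∀ i : ℕ, ∃ M : ℕ, ∀ q, M ≤ q → ((T i).card + 1 : ℝ≥0) ≤ f q :=
    fun i => Filter.tendsto_atTop_atTop.mp hf (((T i).card + 1 : ℝ≥0))
  choose M hM using hMex
  -- the tower of integers
  let N : ℕ → ℕ := fun i =>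
    Nat.rec (d 0 * (M 0 + 1)) (fun i Ni => (Ni * d (i + 1)) * (M (i + 1) + Ni + 1)) i
  have hNsucc : ∀ i, N (i + 1) = (N i * d (i + 1)) * (M (i + 1) + N i + 1) := fun i => rfl
  have hN0 : ∀ i, 0 < N i := by
    intro i
    induction i with
    | zero => exact Nat.mul_pos (hd 0) (Nat.succ_pos _)
    | succ i ih =>
      rw [hNsucc]
      exact Nat.mul_pos (Nat.mul_pos ih (hd _)) (Nat.succ_pos _)
  have hNd : ∀ i, d i ∣ N i := by
    intro i
    cases i with
    | zero => exact dvd_mul_right _ _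
    | succ i =>
      rw [hNsucc]
      exact ((dvd_mul_left (d (i + 1)) (N i)).mul_right _)
  have hNM : ∀ i, M i ≤ N i := by
    intro i
    cases i with
    | zero =>
      calc M 0 ≤ M 0 + 1 := Nat.le_succ _
        _ ≤ d 0 * (M 0 + 1) := Nat.le_mul_of_pos_left _ (hd 0)
    | succ i =>
      rw [hNsucc]
      calc M (i + 1) ≤ M (i + 1) + N i + 1 := by omega
        _ ≤ (N i * d (i + 1)) * (M (i + 1) + N i + 1) :=
          Nat.le_mul_of_pos_left _ (Nat.mul_pos (hN0 i) (hd _))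
  have hNdvd : ∀ i, N i ∣ N (i + 1) := by
    intro i
    rw [hNsucc]
    exact (dvd_mul_right (N i) (d (i + 1))).mul_right _
  have hNgrow : ∀ i, i + 1 ≤ N i := by
    intro i
    induction i with
    | zero => exact hN0 0
    | succ i ih =>
      rw [hNsucc]
      calc i + 2 ≤ N i + 1 := by omega
        _ ≤ M (i + 1) + N i + 1 := by omega
        _ ≤ (N i * d (i + 1)) * (M (i + 1) + N i + 1) :=
          Nat.le_mul_of_pos_left _ (Nat.mul_pos (hN0 i) (hd _))
  refine ⟨fun i => SRG.PP φ i (N i), ?_, ?_, ?_, ?_, ?_⟩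
  · exact fun i => SRG.PP_finiteIndex φ i (N i) (hN0 i)
  · intro i
    intro x hx
    rw [SRG.mem_PP] at hx ⊢
    exact ⟨SRG.KK_mono (Nat.le_succ i) hx.1,
      dvd_trans (Int.natCast_dvd_natCast.mpr (hNdvd i)) hx.2⟩
  · rw [Subgroup.eq_bot_iff_forall]
    intro x hx
    have hx' : ∀ i, x ∈ SRG.PP φ i (N i) := fun i => Subgroup.mem_iInf.mp hx i
    have hleft : x.left = 1 := by
      have h1 : x.left ∈ (⨅ n, SRG.KK r n) :=
        Subgroup.mem_iInf.mpr fun i => ((SRG.mem_PP φ).mp (hx' i)).1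
      rw [SRG.KK_bot] at h1
      exact Subgroup.mem_bot.mp h1
    have hright : x.right = 1 := by
      have h0 : x.right.toAdd = 0 := by
        by_contra h
        set i := x.right.toAdd.natAbs with hi
        have hdvd := ((SRG.mem_PP φ).mp (hx' i)).2
        have hdvd2 : N i ∣ i := by
          rw [hi]
          exact Int.natCast_dvd.mp hdvd
        have h3 : N i ≤ i :=
          Nat.le_of_dvd (by rw [hi]; exact Int.natAbs_pos.mpr h) hdvd2
        have := hNgrow i
        omega
      have : x.right = Multiplicative.ofAdd 0 := by
        rw [← h0, ofAdd_toAdd]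
      rwa [ofAdd_zero] at this
    apply SemidirectProduct.ext
    · rw [hleft]; rfl
    · rw [hright]; rfl
  · intro i
    apply SRG.PP_normal
    intro z hz g
    exact hdper i z (dvd_trans (Int.natCast_dvd_natCast.mpr (hNd i)) hz) g
  · intro i
    obtain ⟨S, hScl, hScard⟩ := SRG.PP_gens φ i (N i) (T i) (hT i)
    refine ⟨S, hScl, ?_⟩
    have hidx : M i ≤ (SRG.PP φ i (N i)).index :=
      le_trans (hNM i) (SRG.PP_index_ge φ i (N i) (hN0 i))
    calc (S.card : ℝ≥0) ≤ ((T i).card + 1 : ℕ) := by exact_mod_cast hScard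
      _ = ((T i).card + 1 : ℝ≥0) := by push_cast; ring
      _ ≤ f ((SRG.PP φ i (N i)).index) := hM i _ hidx
end

section
/- Let Γ be a group, let α: Γ → F be an epimorphism onto a free group F of finite rank r ≥ 2, let φ: F → ℤ be an epimorphism, let ρ: Γ → Q be a homomorphism onto a finite group Q, and let n ≥ 1. Let ψ_n: Γ → ℤ/n be the composition of φ∘α with the canonical projection ℤ → ℤ/n, and let Γ' = ker(ρ × ψ_n : Γ → Q × ℤ/n). Then b₁(Γ') ≥ n(r−1)+1; in particular b₁(Γ') ≥ n. -/
open scoped TensorProduct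

/-- The first Betti number of a group `G`: the `ℚ`-dimension of
`H₁(G;ℚ) = (G^{ab}) ⊗_ℤ ℚ`. -/
noncomputable def b1 (G : Type*) [Group G] : Cardinal :=
  Module.rank ℚ (ℚ ⊗[ℤ] (Additive (Abelianization G)))

namespace B1Aux

variable {n : ℕ} {r : ℕ}

/-- Shift action of `ZMod n` on functions `ZMod n → ℚ`. -/
def shift (a : ZMod n) (w : ZMod n → ℚ) : ZMod n → ℚ := fun x => w (x - a)

@[simp] lemma shift_apply (a : ZMod n) (w : ZMod n → ℚ) (x : ZMod n) :
    shift a w x = w (x - a) := rfl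

@[simp] lemma shift_zero (w : ZMod n → ℚ) : shift (0 : ZMod n) w = w := by
  funext x; simp [shift]

lemma shift_shift (a b : ZMod n) (w : ZMod n → ℚ) :
    shift a (shift b w) = shift (a + b) w := by
  funext x; simp [shift, sub_sub]

@[simp] lemma shift_add (a : ZMod n) (w₁ w₂ : ZMod n → ℚ) :
    shift a (w₁ + w₂) = shift a w₁ + shift a w₂ := rfl

@[simp] lemma shift_neg (a : ZMod n) (w : ZMod n → ℚ) :
    shift a (-w) = -(shift a w) := rfl

@[simp] lemma shift_smul (a : ZMod n) (c : ℚ) (w : ZMod n → ℚ) :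
    shift a (c • w) = c • shift a w := rfl

@[simp] lemma shift_zero_fun (a : ZMod n) : shift a (0 : ZMod n → ℚ) = 0 := rfl

lemma shift_sum {ι : Type*} (s : Finset ι) (a : ZMod n) (f : ι → ZMod n → ℚ) :
    shift a (∑ i ∈ s, f i) = ∑ i ∈ s, shift a (f i) := by
  funext x; simp [shift, Finset.sum_apply]

/-- The semidirect product `(ZMod n → ℚ) ⋊ ZMod n`. -/
@[ext] structure SD (n : ℕ) where
  w : ZMod n → ℚ
  a : ZMod n

instance : Group (SD n) where
  mul p q := ⟨p.w + shift p.a q.w, p.a + q.a⟩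
  one := ⟨0, 0⟩
  inv p := ⟨-(shift (-p.a) p.w), -p.a⟩
  mul_assoc p q s := by
    have hw : (p.w + shift p.a q.w) + shift (p.a + q.a) s.w
        = p.w + shift p.a (q.w + shift q.a s.w) := by
      rw [shift_add, shift_shift, add_assoc]
    ext x
    · exact congrFun hw x
    · exact add_assoc _ _ _
  one_mul p := by
    have hw : (0 : ZMod n → ℚ) + shift 0 p.w = p.w := by simp
    ext x
    · exact congrFun hw x
    · exact zero_add _
  mul_one p := by
    have hw : p.w + shift p.a (0 : ZMod n → ℚ) = p.w := by simp
    ext x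
    · exact congrFun hw x
    · exact add_zero _
  inv_mul_cancel p := by
    have hw : -(shift (-p.a) p.w) + shift (-p.a) p.w = (0 : ZMod n → ℚ) := by simp
    ext x
    · exact congrFun hw x
    · exact neg_add_cancel _

@[simp] lemma mul_w (p q : SD n) : (p * q).w = p.w + shift p.a q.w := rfl
@[simp] lemma mul_a (p q : SD n) : (p * q).a = p.a + q.a := rfl
@[simp] lemma one_w : (1 : SD n).w = 0 := rfl
@[simp] lemma one_a : (1 : SD n).a = 0 := rfl
@[simp] lemma inv_w (p : SD n) : (p⁻¹).w = -(shift (-p.a) p.w) := rfl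
@[simp] lemma inv_a (p : SD n) : (p⁻¹).a = -p.a := rfl

variable (ψ : FreeGroup (Fin r) →* Multiplicative (ZMod n))

/-- Additive version of `ψ`. -/
def tz (g : FreeGroup (Fin r)) : ZMod n := Multiplicative.toAdd (ψ g)

@[simp] lemma tz_one : tz ψ 1 = 0 := by simp [tz]
@[simp] lemma tz_mul (g h : FreeGroup (Fin r)) : tz ψ (g * h) = tz ψ g + tz ψ h := by
  simp [tz]
@[simp] lemma tz_inv (g : FreeGroup (Fin r)) : tz ψ g⁻¹ = -tz ψ g := by simp [tz]
@[simp] lemma tz_pow (g : FreeGroup (Fin r)) (m : ℕ) : tz ψ (g ^ m) = m • tz ψ g := by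
  simp [tz]

/-- The projection `SD n →* Multiplicative (ZMod n)`. -/
def projA : SD n →* Multiplicative (ZMod n) where
  toFun p := Multiplicative.ofAdd p.a
  map_one' := rfl
  map_mul' p q := rfl

/-- The homomorphism `FreeGroup (Fin r) →* SD n` determined by generator values `v`. -/
def dh (v : Fin r → ZMod n → ℚ) : FreeGroup (Fin r) →* SD n :=
  FreeGroup.lift (fun i => ⟨v i, tz ψ (FreeGroup.of i)⟩)

/-- The associated derivation. -/
def der (v : Fin r → ZMod n → ℚ) (g : FreeGroup (Fin r)) : ZMod n → ℚ := (dh ψ v g).w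

lemma dh_a (v : Fin r → ZMod n → ℚ) (g : FreeGroup (Fin r)) :
    (dh ψ v g).a = tz ψ g := by
  have h : (projA.comp (dh ψ v)) = ψ := by
    apply FreeGroup.ext_hom
    intro i
    show Multiplicative.ofAdd (dh ψ v (FreeGroup.of i)).a = ψ (FreeGroup.of i)
    rw [show dh ψ v (FreeGroup.of i) = ⟨v i, tz ψ (FreeGroup.of i)⟩ from FreeGroup.lift_apply_of]
    simp [tz]
  have := DFunLike.congr_fun h g
  simpa [projA, tz] using this.symm ▸ rfl

@[simp] lemma der_of (v : Fin r → ZMod n → ℚ) (i : Fin r) :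
    der ψ v (FreeGroup.of i) = v i := by
  unfold der dh
  rw [FreeGroup.lift_apply_of]

@[simp] lemma der_one (v : Fin r → ZMod n → ℚ) : der ψ v 1 = 0 := by
  unfold der; rw [map_one]; rfl

lemma der_mul (v : Fin r → ZMod n → ℚ) (g h : FreeGroup (Fin r)) :
    der ψ v (g * h) = der ψ v g + shift (tz ψ g) (der ψ v h) := by
  unfold der; rw [map_mul, mul_w, dh_a]

lemma der_inv (v : Fin r → ZMod n → ℚ) (g : FreeGroup (Fin r)) :
    der ψ v g⁻¹ = -(shift (-(tz ψ g)) (der ψ v g)) := by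
  unfold der; rw [map_inv, inv_w, dh_a]

lemma der_unique (u : Fin r → ZMod n → ℚ) (D : FreeGroup (Fin r) → ZMod n → ℚ)
    (hof : ∀ i, D (FreeGroup.of i) = u i)
    (hmul : ∀ g h, D (g * h) = D g + shift (tz ψ g) (D h)) :
    ∀ g, D g = der ψ u g := by
  have hone : D 1 = 0 := by
    have := hmul 1 1
    simp only [one_mul, tz_one, shift_zero] at this
    have h2 : D 1 + 0 = D 1 + D 1 := by rw [add_zero]; exact this
    exact ((add_left_cancel h2)).symm
  let H : FreeGroup (Fin r) →* SD n :=
    { toFun := fun g => ⟨D g, tz ψ g⟩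
      map_one' := by
        ext x
        · exact congrFun hone x
        · simp
      map_mul' := fun g h => by
        have hw : D (g * h) = D g + shift (tz ψ g) (D h) := hmul g h
        ext x
        · exact congrFun hw x
        · simp }
  have hH : H = dh ψ u := by
    apply FreeGroup.ext_hom
    intro i
    have h1 : dh ψ u (FreeGroup.of i) = ⟨u i, tz ψ (FreeGroup.of i)⟩ := FreeGroup.lift_apply_of
    rw [h1]
    show (⟨D (FreeGroup.of i), tz ψ (FreeGroup.of i)⟩ : SD n) = _
    rw [hof]
  intro g
  have := DFunLike.congr_fun hH g
  exact congrArg SD.w this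

lemma der_add (v w : Fin r → ZMod n → ℚ) (g : FreeGroup (Fin r)) :
    der ψ (v + w) g = der ψ v g + der ψ w g := by
  refine (der_unique ψ (v + w) (fun g => der ψ v g + der ψ w g) (fun i => by simp)
    (fun g h => by rw [der_mul, der_mul, shift_add]; abel) g).symm

lemma der_smul (c : ℚ) (v : Fin r → ZMod n → ℚ) (g : FreeGroup (Fin r)) :
    der ψ (c • v) g = c • der ψ v g := by
  refine (der_unique ψ (c • v) (fun g => c • der ψ v g) (fun i => by simp)
    (fun g h => by rw [der_mul, shift_smul, smul_add]) g).symm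

lemma der_tz_eq (v : Fin r → ZMod n → ℚ)
    (hK : ∀ k, tz ψ k = 0 → der ψ v k = 0) {g h : FreeGroup (Fin r)}
    (hgh : tz ψ g = tz ψ h) : der ψ v g = der ψ v h := by
  have h0 : tz ψ (g * h⁻¹) = 0 := by rw [tz_mul, tz_inv, hgh]; exact add_neg_cancel _
  have : der ψ v ((g * h⁻¹) * h) = der ψ v g := by
    rw [show (g * h⁻¹) * h = g by group]
  rw [← this, der_mul, hK _ h0, h0, shift_zero, zero_add]

lemma der_conj (v : Fin r → ZMod n → ℚ) {a b : FreeGroup (Fin r)} (hb : tz ψ b = 0) :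
    der ψ v (a * b * a⁻¹) = shift (tz ψ a) (der ψ v b) := by
  rw [der_mul, der_mul, der_inv, tz_mul, hb, add_zero, shift_neg, shift_shift,
    add_neg_cancel, shift_zero]
  abel

lemma der_pow (v : Fin r → ZMod n → ℚ) {k : FreeGroup (Fin r)} (hk : tz ψ k = 0) (m : ℕ) :
    der ψ v (k ^ m) = m • der ψ v k := by
  induction m with
  | zero => simp
  | succ m ih =>
    have htz : tz ψ (k ^ m) = 0 := by rw [tz_pow, hk, smul_zero]
    rw [pow_succ, der_mul, htz, shift_zero, ih, succ_nsmul]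

end B1Aux

/-- **The key step in Lemma 2.2.** Let `α : Γ → F` be an epimorphism onto a free group
of rank `r ≥ 2`, let `φ : F → ℤ` be an epimorphism, let `ρ : Γ → Q` be an epimorphism
onto a finite group, and let `n ≥ 1`.  Let `ψₙ : Γ → ℤ/n` be `φ ∘ α` reduced mod `n`
and let `Γ' = ker (ρ × ψₙ : Γ → Q × ℤ/n)`.  Then `b₁(Γ') ≥ n(r−1)+1`; in particular
`b₁(Γ') ≥ n`. -/
theorem betti_lower_bound_of_kernel
    (Γ : Type*) [Group Γ]
    (r : ℕ) (hr : 2 ≤ r) (α : Γ →* FreeGroup (Fin r)) (hα : Function.Surjective α)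
    (φ : FreeGroup (Fin r) →* Multiplicative ℤ) (hφ : Function.Surjective φ)
    (Q : Type*) [Group Q] [Finite Q] (ρ : Γ →* Q) (hρ : Function.Surjective ρ)
    (n : ℕ) (hn : 1 ≤ n)
    (Γ' : Subgroup Γ)
    (hΓ' : Γ' = (ρ.prod
      (((AddMonoidHom.toMultiplicative (Int.castAddHom (ZMod n))).comp φ).comp α)).ker) :
    ((n * (r - 1) + 1 : ℕ) : Cardinal) ≤ b1 ↥Γ' ∧ ((n : ℕ) : Cardinal) ≤ b1 ↥Γ' := by
  classical
  haveI : NeZero n := ⟨by omega⟩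
  set ψ : FreeGroup (Fin r) →* Multiplicative (ZMod n) :=
    (AddMonoidHom.toMultiplicative (Int.castAddHom (ZMod n))).comp φ with hψdef
  -- membership description of Γ'
  have hmem : ∀ γ : Γ, γ ∈ Γ' ↔ (ρ γ = 1 ∧ ψ (α γ) = 1) := by
    intro γ
    rw [hΓ', MonoidHom.mem_ker, MonoidHom.prod_apply, Prod.mk_eq_one]
    exact Iff.rfl
  have hγ0 : ∀ γ : Γ, γ ∈ Γ' → B1Aux.tz ψ (α γ) = 0 := by
    intro γ hγ
    unfold B1Aux.tz
    rw [((hmem γ).1 hγ).2]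
    rfl
  -- surjectivity of tz ∘ α
  have hψsurj : Function.Surjective ψ := by
    have h1 : Function.Surjective (AddMonoidHom.toMultiplicative (Int.castAddHom (ZMod n))) := by
      intro x
      obtain ⟨m, hm⟩ := ZMod.intCast_surjective (Multiplicative.toAdd x)
      exact ⟨Multiplicative.ofAdd m, by
        simp only [AddMonoidHom.toMultiplicative_apply_apply, Int.coe_castAddHom, toAdd_ofAdd,
          hm, ofAdd_toAdd]⟩
    exact h1.comp hφ
  have htzsurj : ∀ c : ZMod n, ∃ γ : Γ, B1Aux.tz ψ (α γ) = c := by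
    intro c
    obtain ⟨g, hg⟩ := hψsurj (Multiplicative.ofAdd c)
    obtain ⟨γ, hγ⟩ := hα g
    refine ⟨γ, ?_⟩
    unfold B1Aux.tz
    rw [hγ, hg]
    rfl
  -- section of tz
  obtain ⟨x1, hx1⟩ := hφ (Multiplicative.ofAdd 1)
  set σ : ZMod n → FreeGroup (Fin r) := fun c => x1 ^ (ZMod.val c) with hσ
  have htzx1 : B1Aux.tz ψ x1 = 1 := by
    unfold B1Aux.tz
    rw [hψdef, MonoidHom.comp_apply, hx1]
    simp only [AddMonoidHom.toMultiplicative_apply_apply, toAdd_ofAdd, Int.coe_castAddHom]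
    norm_num
  have htzσ : ∀ c, B1Aux.tz ψ (σ c) = c := by
    intro c
    rw [hσ]
    dsimp only
    rw [B1Aux.tz_pow, htzx1, nsmul_eq_mul, mul_one]
    exact ZMod.natCast_rightInverse c
  -- the dual-valued evaluation maps
  have hlin_add : ∀ (γ : ↥Γ') (v w : Fin r → ZMod n → ℚ),
      B1Aux.der ψ (v + w) (α ↑γ) 0 = B1Aux.der ψ v (α ↑γ) 0 + B1Aux.der ψ w (α ↑γ) 0 := by
    intro γ v w
    rw [B1Aux.der_add]
    rfl
  have hlin_smul : ∀ (γ : ↥Γ') (c : ℚ) (v : Fin r → ZMod n → ℚ),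
      B1Aux.der ψ (c • v) (α ↑γ) 0 = c • B1Aux.der ψ v (α ↑γ) 0 := by
    intro γ c v
    rw [B1Aux.der_smul]
    rfl
  set lmap : ↥Γ' → Module.Dual ℚ (Fin r → ZMod n → ℚ) := fun γ =>
    { toFun := fun v => B1Aux.der ψ v (α ↑γ) 0
      map_add' := hlin_add γ
      map_smul' := hlin_smul γ } with hlmap
  have hlmapmul : ∀ γ δ : ↥Γ', lmap (γ * δ) = lmap γ + lmap δ := by
    intro γ δ
    apply LinearMap.ext
    intro v
    show B1Aux.der ψ v (α ↑(γ * δ)) 0 = B1Aux.der ψ v (α ↑γ) 0 + B1Aux.der ψ v (α ↑δ) 0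
    rw [Subgroup.coe_mul, map_mul, B1Aux.der_mul, hγ0 _ γ.2, B1Aux.shift_zero]
    rfl
  have hlmapone : lmap 1 = 0 := by
    apply LinearMap.ext
    intro v
    show B1Aux.der ψ v (α ↑(1 : ↥Γ')) 0 = 0
    rw [OneMemClass.coe_one, map_one, B1Aux.der_one]
    rfl
  set mh : ↥Γ' →* Multiplicative (Module.Dual ℚ (Fin r → ZMod n → ℚ)) :=
    { toFun := fun γ => Multiplicative.ofAdd (lmap γ)
      map_one' := by
        show Multiplicative.ofAdd (lmap 1) = 1
        rw [hlmapone]; rfl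
      map_mul' := fun γ δ => by
        show Multiplicative.ofAdd (lmap (γ * δ))
          = Multiplicative.ofAdd (lmap γ) * Multiplicative.ofAdd (lmap δ)
        rw [hlmapmul]; rfl } with hmh
  set E : (ℚ ⊗[ℤ] (Additive (Abelianization ↥Γ'))) →ₗ[ℚ]
      Module.Dual ℚ (Fin r → ZMod n → ℚ) :=
    LinearMap.liftBaseChange ℚ
      ((MonoidHom.toAdditiveLeft (Abelianization.lift mh)).toIntLinearMap) with hE
  have hEof : ∀ γ : ↥Γ',
      E ((1 : ℚ) ⊗ₜ[ℤ] Additive.ofMul (Abelianization.of γ)) = lmap γ := by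
    intro γ
    rw [hE, LinearMap.liftBaseChange_tmul, one_smul]
    show Multiplicative.toAdd (Abelianization.lift mh (Abelianization.of γ)) = lmap γ
    rw [Abelianization.lift_apply_of]
    rfl
  have hofsurj : Function.Surjective (Abelianization.of : ↥Γ' → Abelianization ↥Γ') :=
    fun x => QuotientGroup.induction_on x fun z => ⟨z, rfl⟩
  set Kv := (LinearMap.range E).dualCoannihilator with hKv
  have hKvmem : ∀ v, v ∈ Kv ↔ ∀ γ : ↥Γ', B1Aux.der ψ v (α ↑γ) 0 = 0 := by
    intro v
    rw [hKv, Submodule.mem_dualCoannihilator]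
    constructor
    · intro h γ
      have h1 := h (E ((1 : ℚ) ⊗ₜ[ℤ] Additive.ofMul (Abelianization.of γ)))
        (LinearMap.mem_range_self _ _)
      rw [hEof] at h1
      exact h1
    · intro h f hf
      obtain ⟨a, rfl⟩ := hf
      have key : ∀ m : Additive (Abelianization ↥Γ'),
          (((MonoidHom.toAdditiveLeft (Abelianization.lift mh)).toIntLinearMap) m) v = 0 := by
        intro m
        obtain ⟨γ, hγ⟩ := hofsurj (Additive.toMul m)
        have e1 : ((MonoidHom.toAdditiveLeft (Abelianization.lift mh)).toIntLinearMap) m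
            = Multiplicative.toAdd (Abelianization.lift mh (Additive.toMul m)) := rfl
        rw [e1, ← hγ, Abelianization.lift_apply_of]
        exact h γ
      induction a using TensorProduct.induction_on with
      | zero => simp
      | tmul q m =>
        rw [hE, LinearMap.liftBaseChange_tmul, LinearMap.smul_apply, key m, smul_zero]
      | add x y hx hy => rw [map_add, LinearMap.add_apply, hx, hy, add_zero]
  -- elements of Kv give derivations vanishing on all of ker ψ
  have hnormal : ∀ (γ₀ γ : Γ), γ ∈ Γ' → γ₀ * γ * γ₀⁻¹ ∈ Γ' := by
    intro γ₀ γ hγ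
    rw [hΓ'] at hγ ⊢
    exact Subgroup.Normal.conj_mem (MonoidHom.normal_ker _) γ hγ γ₀
  have hKzero : ∀ v ∈ Kv, ∀ k : FreeGroup (Fin r),
      B1Aux.tz ψ k = 0 → B1Aux.der ψ v k = 0 := by
    intro v hv
    have hfull : ∀ γ : ↥Γ', B1Aux.der ψ v (α ↑γ) = 0 := by
      intro γ
      funext x
      obtain ⟨γ₀, hγ₀⟩ := htzsurj (-x)
      have hmem2 : γ₀ * ↑γ * γ₀⁻¹ ∈ Γ' := hnormal γ₀ ↑γ γ.2
      have h1 := (hKvmem v).1 hv ⟨_, hmem2⟩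
      have h2 : α (γ₀ * ↑γ * γ₀⁻¹) = α γ₀ * α ↑γ * (α γ₀)⁻¹ := by
        rw [map_mul, map_mul, map_inv]
      rw [show ((⟨_, hmem2⟩ : ↥Γ') : Γ) = γ₀ * ↑γ * γ₀⁻¹ from rfl, h2,
        B1Aux.der_conj ψ v (hγ0 _ γ.2), B1Aux.shift_apply, hγ₀] at h1
      simpa using h1
    intro k hk
    obtain ⟨γ, hγ⟩ := hα k
    have hγtz : B1Aux.tz ψ (α γ) = 0 := by rw [hγ]; exact hk
    have hψ1 : ψ (α γ) = 1 := by
      have h3 := congrArg Multiplicative.ofAdd hγtz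
      simpa [B1Aux.tz] using h3
    set m := Nat.card Q with hm
    have hmpos : 0 < m := Nat.card_pos
    have hpow : γ ^ m ∈ Γ' := by
      rw [hmem]
      refine ⟨?_, ?_⟩
      · rw [map_pow, hm]
        exact pow_card_eq_one'
      · rw [map_pow, map_pow, hψ1, one_pow]
    have h4 := hfull ⟨γ ^ m, hpow⟩
    rw [show ((⟨γ ^ m, hpow⟩ : ↥Γ') : Γ) = γ ^ m from rfl,
      show α (γ ^ m) = k ^ m by rw [map_pow, hγ], B1Aux.der_pow ψ v hk m] at h4
    have h5 : (m : ℚ) • B1Aux.der ψ v k = 0 := by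
      rw [Nat.cast_smul_eq_nsmul]
      exact h4
    have h6 := smul_eq_zero.mp h5
    rcases h6 with h6 | h6
    · exact absurd h6 (by positivity)
    · exact h6
  -- the averaging map
  have hn0 : (n : ℚ) ≠ 0 := Nat.cast_ne_zero.mpr (by omega)
  set wfun : (Fin r → ZMod n → ℚ) → (ZMod n → ℚ) :=
    fun v => (-(n : ℚ)⁻¹) • ∑ c : ZMod n, B1Aux.der ψ v (σ c) with hwfun
  have hwadd : ∀ v w, wfun (v + w) = wfun v + wfun w := by
    intro v w
    have h1 : ∀ c : ZMod n, B1Aux.der ψ (v + w) (σ c)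
        = B1Aux.der ψ v (σ c) + B1Aux.der ψ w (σ c) := fun c => B1Aux.der_add ψ v w (σ c)
    rw [hwfun]
    dsimp only
    rw [Finset.sum_congr rfl (fun c _ => h1 c), Finset.sum_add_distrib, smul_add]
  have hwsmul : ∀ (q : ℚ) v, wfun (q • v) = q • wfun v := by
    intro q v
    have h1 : ∀ c : ZMod n, B1Aux.der ψ (q • v) (σ c)
        = q • B1Aux.der ψ v (σ c) := fun c => B1Aux.der_smul ψ q v (σ c)
    rw [hwfun]
    dsimp only
    rw [Finset.sum_congr rfl (fun c _ => h1 c), ← Finset.smul_sum, smul_comm]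
  -- main structure identity for derivations vanishing on the kernel
  have hkey : ∀ v, (∀ k, B1Aux.tz ψ k = 0 → B1Aux.der ψ v k = 0) →
      ∀ g, B1Aux.der ψ v g
        = B1Aux.shift (B1Aux.tz ψ g) (wfun v) - wfun v := by
    intro v hK g
    set S := ∑ c : ZMod n, B1Aux.der ψ v (σ c) with hS
    have hδ : ∀ b : ZMod n, (n : ℚ) • B1Aux.der ψ v (σ b) = S - B1Aux.shift b S := by
      intro b
      have h1 : ∀ c : ZMod n, B1Aux.der ψ v (σ (b + c))
          = B1Aux.der ψ v (σ b) + B1Aux.shift b (B1Aux.der ψ v (σ c)) := by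
        intro c
        have e1 : B1Aux.der ψ v (σ (b + c)) = B1Aux.der ψ v (σ b * σ c) :=
          B1Aux.der_tz_eq ψ v hK (by rw [htzσ, B1Aux.tz_mul, htzσ, htzσ])
        rw [e1, B1Aux.der_mul, htzσ]
      have h2 : ∑ c : ZMod n, B1Aux.der ψ v (σ (b + c)) = S := by
        rw [hS]
        exact Fintype.sum_equiv (Equiv.addLeft b) _ _ (fun c => rfl)
      have h3 : ∑ c : ZMod n, B1Aux.der ψ v (σ (b + c))
          = (n : ℕ) • B1Aux.der ψ v (σ b) + B1Aux.shift b S := by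
        rw [Finset.sum_congr rfl (fun c _ => h1 c), Finset.sum_add_distrib,
          Finset.sum_const, Finset.card_univ, ZMod.card, hS, B1Aux.shift_sum]
      rw [h2] at h3
      have h4 : (n : ℕ) • B1Aux.der ψ v (σ b) = S - B1Aux.shift b S := by
        rw [eq_sub_iff_add_eq, ← h3]
      rw [← h4, Nat.cast_smul_eq_nsmul]
    have e2 : B1Aux.der ψ v g = B1Aux.der ψ v (σ (B1Aux.tz ψ g)) :=
      B1Aux.der_tz_eq ψ v hK (by rw [htzσ])
    have h5 := hδ (B1Aux.tz ψ g)
    have h6 : B1Aux.der ψ v (σ (B1Aux.tz ψ g))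
        = (n : ℚ)⁻¹ • (S - B1Aux.shift (B1Aux.tz ψ g) S) := by
      rw [← h5, ← smul_assoc, smul_eq_mul, inv_mul_cancel₀ hn0, one_smul]
    rw [e2, h6, hwfun]
    dsimp only
    rw [← hS]
    funext x
    simp only [Pi.smul_apply, Pi.sub_apply, B1Aux.shift_apply, Pi.neg_apply, smul_eq_mul]
    ring
  -- the linear map J
  set J : (Fin r → ZMod n → ℚ) →ₗ[ℚ] (ZMod n → ℚ) :=
    { toFun := fun v => fun c => wfun v c - wfun v 0
      map_add' := fun v w => by
        funext c
        show wfun (v + w) c - wfun (v + w) 0 = _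
        rw [hwadd]
        simp only [Pi.add_apply]
        ring
      map_smul' := fun q v => by
        funext c
        show wfun (q • v) c - wfun (q • v) 0 = _
        rw [hwsmul]
        simp only [Pi.smul_apply, smul_eq_mul, RingHom.id_apply]
        ring } with hJ
  have hJapp : ∀ v c, J v c = wfun v c - wfun v 0 := fun v c => rfl
  have hJker : ∀ v ∈ Kv, J v = 0 → v = 0 := by
    intro v hv hJv
    have hK := hKzero v hv
    have hwconst : ∀ c, wfun v c = wfun v 0 := by
      intro c
      have h1 := congrFun hJv c
      rw [hJapp] at h1
      simpa [sub_eq_zero] using h1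
    funext i x
    have h6 := hkey v hK (FreeGroup.of i)
    rw [B1Aux.der_of] at h6
    have h7 := congrFun h6 x
    rw [Pi.sub_apply, B1Aux.shift_apply,
      hwconst (x - B1Aux.tz ψ (FreeGroup.of i)), hwconst x, sub_self] at h7
    exact h7
  -- evaluation at 0 and its kernel
  set p0 : ((ZMod n → ℚ) →ₗ[ℚ] ℚ) := LinearMap.proj (0 : ZMod n) with hp0
  have hp0surj : Function.Surjective p0 := fun q => ⟨fun _ => q, rfl⟩
  have hkerp0 : Module.finrank ℚ ↥(LinearMap.ker p0) = n - 1 := by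
    have h1 := LinearMap.finrank_range_add_finrank_ker p0
    rw [LinearMap.range_eq_top.mpr hp0surj, finrank_top, Module.finrank_self,
      Module.finrank_fintype_fun_eq_card, ZMod.card] at h1
    omega
  have hJmem : ∀ v, J v ∈ LinearMap.ker p0 := by
    intro v
    rw [LinearMap.mem_ker]
    show J v 0 = 0
    rw [hJapp, sub_self]
  set Jres : ↥Kv →ₗ[ℚ] ↥(LinearMap.ker p0) :=
    LinearMap.codRestrict _ (J.comp Kv.subtype) (fun x => hJmem ↑x) with hJres
  have hJresinj : Function.Injective Jres := by
    intro x y hxy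
    have h1 : J ↑x = J ↑y := by
      have := congrArg (Subtype.val) hxy
      exact this
    have h2 : J (↑x - ↑y : Fin r → ZMod n → ℚ) = 0 := by
      rw [map_sub, h1, sub_self]
    have h3 : (↑x - ↑y : Fin r → ZMod n → ℚ) ∈ Kv := sub_mem x.2 y.2
    have h4 := hJker _ h3 h2
    exact Subtype.ext (sub_eq_zero.mp h4)
  have hKvrank : Module.finrank ℚ ↥Kv ≤ n - 1 := by
    have := LinearMap.finrank_le_finrank_of_injective hJresinj
    rwa [hkerp0] at this
  -- duality count
  have hdual := Subspace.finrank_add_finrank_dualCoannihilator_eq (LinearMap.range E)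
  have hW : Module.finrank ℚ (Fin r → ZMod n → ℚ) = r * n := by
    rw [Module.finrank_pi_fintype]
    simp only [Module.finrank_fintype_fun_eq_card, ZMod.card]
    rw [Finset.sum_const, Finset.card_univ, Fintype.card_fin, smul_eq_mul]
  have hrange : n * (r - 1) + 1 ≤ Module.finrank ℚ ↥(LinearMap.range E) := by
    have h1 : r - 1 + 1 = r := by omega
    have h2 : n * (r - 1) + n = n * r := by
      conv_rhs => rw [← h1]
      rw [Nat.mul_succ]
    have h3 : r * n = n * r := Nat.mul_comm r n
    rw [hW, ← hKv] at hdual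
    omega
  haveI hfd1 : FiniteDimensional ℚ (Fin r → ZMod n → ℚ) := inferInstance
  haveI hfd2 : FiniteDimensional ℚ (Module.Dual ℚ (Fin r → ZMod n → ℚ)) := inferInstance
  haveI hfd3 : Module.Finite ℚ ↥(LinearMap.range E) :=
    FiniteDimensional.finiteDimensional_submodule (LinearMap.range E)
  have main : ((n * (r - 1) + 1 : ℕ) : Cardinal) ≤ b1 ↥Γ' := by
    have hb1 : b1 ↥Γ' = Module.rank ℚ (ℚ ⊗[ℤ] (Additive (Abelianization ↥Γ'))) := rfl
    rw [hb1]
    have i4 := lift_rank_range_le E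
    have i5 : ((n * (r - 1) + 1 : ℕ) : Cardinal)
        ≤ Cardinal.lift (Module.rank ℚ ↥(LinearMap.range E)) := by
      rw [← Module.finrank_eq_rank, Cardinal.lift_natCast, Nat.cast_le]
      exact hrange
    have i6 := i5.trans i4
    simpa using i6
  refine ⟨main, le_trans ?_ main⟩
  apply Nat.cast_le.mpr
  have h1 : n * 1 ≤ n * (r - 1) := Nat.mul_le_mul_left n (by omega)
  omega
end
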